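/- (Empty cylinder lemma.) Let t, α, β be positive real numbers with t^β > 2t^α. Suppose v ∈ ℤ^{n+1} satisfies r(v) = t^{α−1−β} and h(v) = t^α. Then the half-open cylinder C = { x ∈ ℝ^{n+1} : r(x) < t and t^{−β} ≤ h(x) ≤ t^{−α} − t^{−β} } contains no integer point, i.e. C ∩ ℤ^{n+1} = ∅. -/

import Mathlib

open scoped RealInnerProductSpace

/-- The vector `(1, θ₁, …, θₙ) ∈ ℝ^{n+1}`. -/
noncomputable def thetaVec (n : ℕ) (θ : Fin n → ℝ) : EuclideanSpace ℝ (Fin (n+1)) :=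
  (EuclideanSpace.equiv (Fin (n+1)) ℝ).symm (Fin.cons 1 θ)

/-- The line `ℓ` spanned by `(1, θ₁, …, θₙ)`. -/
noncomputable def lineTheta (n : ℕ) (θ : Fin n → ℝ) :
    Submodule ℝ (EuclideanSpace ℝ (Fin (n+1))) :=
  Submodule.span ℝ {thetaVec n θ}

/-- `r(x)`: the Euclidean distance from `x` to the line `ℓ`. -/
noncomputable def rdist (n : ℕ) (θ : Fin n → ℝ) (x : EuclideanSpace ℝ (Fin (n+1))) : ℝ :=
  Metric.infDist x (lineTheta n θ : Set (EuclideanSpace ℝ (Fin (n+1))))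

/-- `h(x)`: the Euclidean distance from `x` to `ℓ^⊥`. -/
noncomputable def hdist (n : ℕ) (θ : Fin n → ℝ) (x : EuclideanSpace ℝ (Fin (n+1))) : ℝ :=
  Metric.infDist x ((lineTheta n θ)ᗮ : Set (EuclideanSpace ℝ (Fin (n+1))))

/-- `x ∈ ℤ^{n+1}`: all coordinates of `x` are integers. -/
def IsIntegerPoint (n : ℕ) (x : EuclideanSpace ℝ (Fin (n+1))) : Prop :=
  ∀ i, ∃ m : ℤ, x i = (m : ℝ)

lemma infDist_eq_norm_sub_orthogonalProjection
    {E : Type*} [NormedAddCommGroup E] [InnerProductSpace ℝ E]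
    (U : Submodule ℝ E) [U.HasOrthogonalProjection] (x : E) :
    Metric.infDist x (U : Set E) = ‖x - Submodule.orthogonalProjectionOnto U x‖ := by
  rw [Metric.infDist_eq_iInf, ← Submodule.starProjection_apply, Submodule.starProjection_minimal]
  simp only [dist_eq_norm]
  rfl

lemma infDist_orthogonal_eq_norm_orthogonalProjection
    {E : Type*} [NormedAddCommGroup E] [InnerProductSpace ℝ E]
    (U : Submodule ℝ E) [U.HasOrthogonalProjection] (x : E) :
    Metric.infDist x ((Uᗮ : Submodule ℝ E) : Set E) = ‖(Submodule.orthogonalProjectionOnto U x : E)‖ := by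
  rw [infDist_eq_norm_sub_orthogonalProjection, ← Submodule.starProjection_apply, Submodule.starProjection_orthogonal_val,
    sub_sub_cancel, Submodule.starProjection_apply]

/-- Empty cylinder lemma: if `t^β > 2t^α` and `v ∈ ℤ^{n+1}` satisfies
`r(v) = t^{α-1-β}`, `h(v) = t^α`, then the half-open cylinder
`C = { x : r(x) < t, t^{-β} ≤ h(x) ≤ t^{-α} - t^{-β} }` contains no integer point. -/
theorem stmt1 (n : ℕ) (hn : 2 ≤ n) (θ : Fin n → ℝ) (t α β : ℝ)
    (ht : 0 < t) (hα : 0 < α) (hβ : 0 < β)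
    (htβα : 2 * t ^ α < t ^ β)
    (v : EuclideanSpace ℝ (Fin (n+1)))
    (hv : IsIntegerPoint n v)
    (hrv : rdist n θ v = t ^ (α - 1 - β))
    (hhv : hdist n θ v = t ^ α) :
    ∀ x : EuclideanSpace ℝ (Fin (n+1)),
      rdist n θ x < t → t ^ (-β) ≤ hdist n θ x → hdist n θ x ≤ t ^ (-α) - t ^ (-β) →
      ¬ IsIntegerPoint n x := by
  intro x hrx hhx1 hhx2 hx
  classical
  have hr : ∀ z : EuclideanSpace ℝ (Fin (n+1)),
      rdist n θ z = ‖z - (Submodule.orthogonalProjectionOnto (lineTheta n θ) z : EuclideanSpace ℝ (Fin (n+1)))‖ :=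
    fun z => infDist_eq_norm_sub_orthogonalProjection _ z
  have hh : ∀ z : EuclideanSpace ℝ (Fin (n+1)),
      hdist n θ z = ‖(Submodule.orthogonalProjectionOnto (lineTheta n θ) z : EuclideanSpace ℝ (Fin (n+1)))‖ :=
    fun z => infDist_orthogonal_eq_norm_orthogonalProjection _ z
  have hhx' := hh x
  have hhv' := hh v
  have hrx' := hr x
  have hrv2 := hr v
  set Px : EuclideanSpace ℝ (Fin (n+1)) := (↑(Submodule.orthogonalProjectionOnto (lineTheta n θ) x) : EuclideanSpace ℝ (Fin (n+1))) with hPx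
  set Pv : EuclideanSpace ℝ (Fin (n+1)) := (↑(Submodule.orthogonalProjectionOnto (lineTheta n θ) v) : EuclideanSpace ℝ (Fin (n+1))) with hPv
  have hQxmem : x - Px ∈ (lineTheta n θ)ᗮ := Submodule.sub_starProjection_mem_orthogonal x
  have hQvmem : v - Pv ∈ (lineTheta n θ)ᗮ := Submodule.sub_starProjection_mem_orthogonal v
  have hPxmem : Px ∈ lineTheta n θ := (Submodule.orthogonalProjectionOnto (lineTheta n θ) x).2
  have hPvmem : Pv ∈ lineTheta n θ := (Submodule.orthogonalProjectionOnto (lineTheta n θ) v).2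
  -- inner product splits
  have hsplit : ⟪x, v⟫ = ⟪Px, Pv⟫ + ⟪x - Px, v - Pv⟫ := by
    have hx' : x = Px + (x - Px) := by abel
    have hv' : v = Pv + (v - Pv) := by abel
    conv_lhs => rw [hx', hv']
    rw [inner_add_left, inner_add_right, inner_add_right,
      Submodule.inner_right_of_mem_orthogonal hPxmem hQvmem,
      Submodule.inner_left_of_mem_orthogonal hPvmem hQxmem]
    ring
  set A : ℝ := ⟪Px, Pv⟫ with hA
  set B : ℝ := ⟪x - Px, v - Pv⟫ with hB
  -- |A| = hdist x * hdist v
  have hPP : |A| = hdist n θ x * hdist n θ v := by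
    obtain ⟨c, hc⟩ := Submodule.mem_span_singleton.mp hPxmem
    obtain ⟨d, hd⟩ := Submodule.mem_span_singleton.mp hPvmem
    rw [hhx', hhv', hA, ← hc, ← hd, real_inner_smul_left, real_inner_smul_right,
      real_inner_self_eq_norm_sq, norm_smul, norm_smul]
    simp only [abs_mul, Real.norm_eq_abs, abs_norm, sq, abs_abs,
      abs_of_nonneg (norm_nonneg (thetaVec n θ))]
    ring
  -- Cauchy-Schwarz
  have hQQ : |B| ≤ rdist n θ x * rdist n θ v := by
    rw [hrx', hrv2, hB]; exact abs_real_inner_le_norm _ _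
  -- integrality
  obtain ⟨mx, hmx⟩ := Classical.axiomOfChoice hx
  obtain ⟨mv, hmv⟩ := Classical.axiomOfChoice hv
  obtain ⟨N, hN⟩ : ∃ N : ℤ, ⟪x, v⟫ = (N : ℝ) := by
    refine ⟨∑ i, mx i * mv i, ?_⟩
    have h1 : ⟪x, v⟫ = ∑ i, x i * v i := by
      rw [PiLp.inner_apply]
      exact Finset.sum_congr rfl fun i _ => by simp [RCLike.inner_apply, mul_comm]
    rw [h1]
    push_cast
    exact Finset.sum_congr rfl fun i _ => by rw [hmx i, hmv i]
  -- numeric bounds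
  have htab : (0:ℝ) < t ^ (α - β) := Real.rpow_pos_of_pos ht _
  have hQQ' : |B| < t ^ (α - β) := by
    refine lt_of_le_of_lt hQQ ?_
    have hrv' : (0:ℝ) < rdist n θ v := by
      rw [hrv]; exact Real.rpow_pos_of_pos ht _
    calc rdist n θ x * rdist n θ v < t * rdist n θ v :=
          mul_lt_mul_of_pos_right hrx hrv'
      _ = t ^ (α - β) := by
          rw [hrv]
          nth_rewrite 1 [← Real.rpow_one t]
          rw [← Real.rpow_add ht]
          ring_nf
  have hPPlow : t ^ (α - β) ≤ |A| := by
    rw [hPP, hhv]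

    calc t ^ (α - β) = t ^ (-β) * t ^ α := by
          rw [← Real.rpow_add ht]; ring_nf
      _ ≤ hdist n θ x * t ^ α :=
          mul_le_mul_of_nonneg_right hhx1 (Real.rpow_pos_of_pos ht _).le
  have hPPhigh : |A| ≤ 1 - t ^ (α - β) := by
    rw [hPP, hhv]
    calc hdist n θ x * t ^ α ≤ (t ^ (-α) - t ^ (-β)) * t ^ α :=
          mul_le_mul_of_nonneg_right hhx2 (Real.rpow_pos_of_pos ht _).le
      _ = 1 - t ^ (α - β) := by
          rw [sub_mul, ← Real.rpow_add ht, ← Real.rpow_add ht, neg_add_cancel,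
            Real.rpow_zero]
          ring_nf
  -- contradiction
  have hNabs : |(N:ℝ)| = |A + B| := by rw [← hN, hsplit]
  have hup : |A + B| ≤ |A| + |B| := abs_add_le _ _
  have hlow : |A| - |B| ≤ |A + B| := by
    have h := abs_sub_abs_le_abs_sub A (-B)
    simpa [sub_neg_eq_add] using h
  have hNlt : |(N:ℝ)| < 1 := by rw [hNabs]; linarith
  have hNpos : (0:ℝ) < |(N:ℝ)| := by rw [hNabs]; linarith
  have hN0 : N ≠ 0 := by
    intro h; rw [h] at hNpos; simp at hNpos
  have h1 : (1:ℝ) ≤ |(N:ℝ)| := by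
    rw [← Int.cast_abs]
    exact_mod_cast Int.one_le_abs hN0
  linarith
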